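/- Let r ≥ 2, let T be an r-uniform supertree with at least two edges, let u and v be two vertices contained in a common edge of T, and let p ≥ q ≥ 1 be integers. Then φ(T^{(1)}(u,v;p,q), x) − φ(T^{(1)}(u,v;p+1,q−1), x) = x^{(r−2)(q−1)} · ( x^{r−2}·φ(T(u;p−q,0), x) − φ((T−v)(u;p−q+1,0), x) ), where T^{(1)}(u,v;p,q) is obtained from T by attaching a pendant path of length p at u and a pendant path of length q at v, and (T−v)(u;p−q+1,0) is obtained from T−v by attaching a pendant path of length p−q+1 at u. -/

import Mathlib

open Classical

noncomputable section

/-- A finite hypergraph: a finite vertex set together with a finite set of edges,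
each edge being a finite set of vertices. -/
structure FinHypergraph (α : Type*) where
  verts : Finset α
  edges : Finset (Finset α)

namespace FinHypergraph

variable {α : Type*}

/-- Every edge of `H` is a subset of the vertex set of `H`. -/
def WellFormed (H : FinHypergraph α) : Prop := ∀ e ∈ H.edges, e ⊆ H.verts

/-- `H` is `r`-uniform: every edge has exactly `r` vertices. -/
def Uniform (H : FinHypergraph α) (r : ℕ) : Prop := ∀ e ∈ H.edges, e.card = r

/-- A set of edges is a matching if its members are pairwise disjoint. -/
def IsMatchingSet (M : Finset (Finset α)) : Prop :=
  ∀ e ∈ M, ∀ f ∈ M, e ≠ f → Disjoint e f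

/-- `m(H,k)`: the number of matchings of `H` consisting of exactly `k` edges. -/
noncomputable def matchCount (H : FinHypergraph α) (k : ℕ) : ℕ :=
  (H.edges.powerset.filter (fun M => M.card = k ∧ IsMatchingSet M)).card

/-- The matching polynomial `φ(H,x) = Σ_k (-1)^k m(H,k) x^(n - r·k)` of an
`r`-uniform hypergraph `H` with `n` vertices, evaluated at a real number `x`. -/
noncomputable def matchPoly (H : FinHypergraph α) (r : ℕ) (x : ℝ) : ℝ :=
  ∑ k ∈ Finset.range (H.verts.card + 1),
    (-1 : ℝ) ^ k * (H.matchCount k : ℝ) * x ^ (H.verts.card - r * k)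

/-- `H − S`: delete the vertices of `S` and all edges meeting `S`. -/
def removeVerts (H : FinHypergraph α) (S : Finset α) : FinHypergraph α :=
  ⟨H.verts \ S, H.edges.filter (fun e => Disjoint e S)⟩

/-- `H` is connected: nonempty vertex set, and any two vertices are linked by a chain of
vertices successively lying in a common edge. -/
def Connected (H : FinHypergraph α) : Prop :=
  H.verts.Nonempty ∧ ∀ u ∈ H.verts, ∀ v ∈ H.verts,
    Relation.ReflTransGen (fun a b => ∃ e ∈ H.edges, a ∈ e ∧ b ∈ e) u v

/-- `H` has a cycle: an alternating sequence `v_0 e_0 v_1 e_1 … v_{ℓ-1} e_{ℓ-1} v_0`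
(with `ℓ ≥ 2`) of distinct vertices and distinct edges such that consecutive vertices lie
in the intermediate edge. -/
def HasCycle (H : FinHypergraph α) : Prop :=
  ∃ (ℓ : ℕ) (v : ℕ → α) (e : ℕ → Finset α), 2 ≤ ℓ ∧
    Set.InjOn v (Set.Iio ℓ) ∧ Set.InjOn e (Set.Iio ℓ) ∧
    ∀ i < ℓ, e i ∈ H.edges ∧ v i ∈ e i ∧ v ((i + 1) % ℓ) ∈ e i

/-- An `r`-uniform supertree: a connected acyclic `r`-uniform hypergraph. -/
def IsSupertree (H : FinHypergraph α) (r : ℕ) : Prop :=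
  H.WellFormed ∧ H.Uniform r ∧ H.Connected ∧ ¬ H.HasCycle

/-- The edges of the `r`-uniform loose path of length `p` along the vertex labelling `w`:
the `i`-th edge consists of the `r` vertices `w (i*(r-1)), …, w ((i+1)*(r-1))`, so that
consecutive edges share exactly one vertex. -/
def loosePathEdges (r p : ℕ) (w : ℕ → α) : Finset (Finset α) :=
  (Finset.range p).image (fun i => (Finset.Icc (i * (r - 1)) ((i + 1) * (r - 1))).image w)

/-- `P` is an `r`-uniform loose path with `m` edges (`P_m^r`); for `m = 0` it is a single
vertex with no edge. -/
def IsLoosePath (r m : ℕ) (P : FinHypergraph α) : Prop :=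
  ∃ w : ℕ → α, Set.InjOn w (Set.Iic (m * (r - 1))) ∧
    P.verts = (Finset.Icc 0 (m * (r - 1))).image w ∧
    P.edges = loosePathEdges r m w

/-- `T'` is obtained from `T` by attaching a pendant path of length `p` at the vertex `v`:
a loose path of length `p`, all of whose vertices other than its first joint vertex are
new, is glued to `T` by identifying its first joint vertex with `v`. -/
def IsPendantPathAttach (r : ℕ) (T : FinHypergraph α) (v : α) (p : ℕ) (T' : FinHypergraph α) : Prop :=
  v ∈ T.verts ∧ ∃ w : ℕ → α, w 0 = v ∧
    Set.InjOn w (Set.Iic (p * (r - 1))) ∧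
    (∀ j, 1 ≤ j → j ≤ p * (r - 1) → w j ∉ T.verts) ∧
    T'.verts = T.verts ∪ (Finset.Icc 1 (p * (r - 1))).image w ∧
    T'.edges = T.edges ∪ loosePathEdges r p w

/-- `T'` is `T(v;p,q)`: obtained from `T` by attaching two pendant paths of lengths `p`
and `q` at the vertex `v`. -/
def IsTwoPathAttach (r : ℕ) (T : FinHypergraph α) (v : α) (p q : ℕ) (T' : FinHypergraph α) : Prop :=
  ∃ T1 : FinHypergraph α, IsPendantPathAttach r T v p T1 ∧ IsPendantPathAttach r T1 v q T'

/-- `T'` is obtained from `T` by attaching a pendant path of length `p` at `u` and a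
pendant path of length `q` at `v`. -/
def IsTwoVertexPathAttach (r : ℕ) (T : FinHypergraph α) (u : α) (p : ℕ) (v : α) (q : ℕ)
    (T' : FinHypergraph α) : Prop :=
  ∃ T1 : FinHypergraph α, IsPendantPathAttach r T u p T1 ∧ IsPendantPathAttach r T1 v q T'

end FinHypergraph

open FinHypergraph

section Aux

open Finset

variable {α : Type*}

lemma FinHypergraph.ext' {H1 H2 : FinHypergraph α} (hv : H1.verts = H2.verts)
    (he : H1.edges = H2.edges) : H1 = H2 := by
  cases H1; cases H2; simp_all

namespace FinHypergraph

lemma matchCount_zero (H : FinHypergraph α) : H.matchCount 0 = 1 := by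
  unfold matchCount
  rw [show (H.edges.powerset.filter (fun M => M.card = 0 ∧ IsMatchingSet M)) = {∅} from ?_]
  · simp
  · ext M
    simp only [mem_filter, mem_powerset, mem_singleton, Finset.card_eq_zero]
    constructor
    · rintro ⟨-, h, -⟩; exact h
    · rintro rfl
      refine ⟨empty_subset _, rfl, ?_⟩
      intro e he; simp at he
 
lemma matchCount_eq_zero {H : FinHypergraph α} (hWF : H.WellFormed) {r : ℕ}
    (hU : H.Uniform r) {k : ℕ} (hk : H.verts.card < r * k) : H.matchCount k = 0 := by
  unfold matchCount
  rw [Finset.card_eq_zero, Finset.filter_eq_empty_iff]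
  rintro M hM ⟨hcard, hmatch⟩
  rw [Finset.mem_powerset] at hM
  have hsub : M.biUnion (fun e => e) ⊆ H.verts := by
    intro a ha
    rw [Finset.mem_biUnion] at ha
    obtain ⟨e, heM, hae⟩ := ha
    exact hWF e (hM heM) hae
  have hcards : (M.biUnion (fun e => e)).card = r * k := by
    rw [Finset.card_biUnion (fun e he f hf hne => hmatch e he f hf hne)]
    calc ∑ e ∈ M, e.card = ∑ e ∈ M, r :=
          Finset.sum_congr rfl (fun e he => hU e (hM he))
      _ = r * k := by rw [Finset.sum_const, hcard]; ring
  have := Finset.card_le_card hsub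
  omega

lemma matchPoly_eq_sum {H : FinHypergraph α} (hWF : H.WellFormed) {r : ℕ}
    (hU : H.Uniform r) (hr : 1 ≤ r) {N : ℕ} (hN : H.verts.card ≤ N) (x : ℝ) :
    H.matchPoly r x = ∑ k ∈ Finset.range (N + 1),
      (-1 : ℝ) ^ k * (H.matchCount k : ℝ) * x ^ (H.verts.card - r * k) := by
  unfold matchPoly
  apply Finset.sum_subset
  · intro k hk; simp only [mem_range] at *; omega
  · intro k _ hk'
    simp only [mem_range, not_lt] at hk'
    have h1 : H.verts.card < r * k := by
      have := Nat.le_mul_of_pos_left k hr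
      omega
    rw [matchCount_eq_zero hWF hU h1]
    simp

lemma matchPoly_isolated {H1 H2 : FinHypergraph α} {r : ℕ} (hWF : H1.WellFormed)
    (hU : H1.Uniform r) (hr : 1 ≤ r) {S : Finset α} (hdisj : Disjoint H1.verts S)
    (hv : H2.verts = H1.verts ∪ S) (he : H2.edges = H1.edges) (x : ℝ) :
    H2.matchPoly r x = x ^ S.card * H1.matchPoly r x := by
  have hm : ∀ k, H2.matchCount k = H1.matchCount k := by
    intro k; unfold matchCount; rw [he]
  have hn : H2.verts.card = H1.verts.card + S.card := by
    rw [hv, Finset.card_union_of_disjoint hdisj]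
  rw [matchPoly_eq_sum hWF hU hr (Nat.le_add_right H1.verts.card S.card) x,
    Finset.mul_sum]
  unfold matchPoly
  rw [show H2.verts.card + 1 = H1.verts.card + S.card + 1 from by omega]
  refine Finset.sum_congr rfl (fun k _ => ?_)
  rw [hm, hn]
  by_cases hle : r * k ≤ H1.verts.card
  · rw [show H1.verts.card + S.card - r * k = (H1.verts.card - r * k) + S.card from by omega,
      pow_add]
    ring
  · rw [matchCount_eq_zero hWF hU (by omega)]
    simp

end FinHypergraph
end Aux
section Aux2
open Finset
variable {α : Type*}
namespace FinHypergraph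

lemma matchCount_rec {H : FinHypergraph α} {e : Finset α} (he : e ∈ H.edges)
    (hne : e.Nonempty) (k : ℕ) :
    H.matchCount (k + 1) =
      (FinHypergraph.mk H.verts (H.edges.erase e)).matchCount (k + 1)
        + (H.removeVerts e).matchCount k := by
  classical
  unfold matchCount
  set P := H.edges.powerset.filter (fun M => M.card = k + 1 ∧ IsMatchingSet M) with hP
  rw [← Finset.card_filter_add_card_filter_not (s := P) (p := fun M => e ∉ M)]
  congr 1
  · -- matchings avoiding e ↔ matchings of the edge-deleted graph
    congr 1
    ext M
    simp only [hP, mem_filter, mem_powerset]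
    constructor
    · rintro ⟨⟨hsub, h2⟩, heM⟩
      exact ⟨fun f hf => Finset.mem_erase.mpr ⟨by rintro rfl; exact heM hf, hsub hf⟩, h2⟩
    · rintro ⟨hsub, h2⟩
      refine ⟨⟨fun f hf => Finset.mem_of_mem_erase (hsub hf), h2⟩, fun heM => ?_⟩
      exact (Finset.mem_erase.mp (hsub heM)).1 rfl
  · -- matchings containing e ↔ matchings of removeVerts e of size k
    apply Finset.card_bij (fun M _ => M.erase e)
    · rintro M hM
      simp only [hP, mem_filter, mem_powerset, not_not] at hM
      obtain ⟨⟨hsub, hcard, hmatch⟩, heM⟩ := hM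
      simp only [mem_filter, mem_powerset]
      refine ⟨?_, ?_, ?_⟩
      · intro f hf
        obtain ⟨hfe, hfM⟩ := Finset.mem_erase.mp hf
        simp only [removeVerts, mem_filter]
        exact ⟨hsub hfM, hmatch f hfM e heM hfe⟩
      · rw [Finset.card_erase_of_mem heM, hcard]; omega
      · intro a ha b hb hab
        exact hmatch a (Finset.mem_of_mem_erase ha) b (Finset.mem_of_mem_erase hb) hab
    · rintro M1 hM1 M2 hM2 hEq
      simp only [hP, mem_filter, not_not] at hM1 hM2
      rw [← Finset.insert_erase hM1.2, ← Finset.insert_erase hM2.2, hEq]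
    · rintro M' hM'
      simp only [mem_filter, mem_powerset] at hM'
      obtain ⟨hsub, hcard, hmatch⟩ := hM'
      have hdisj : ∀ f ∈ M', Disjoint f e := by
        intro f hf
        have h2 := hsub hf
        simp only [removeVerts, mem_filter] at h2
        exact h2.2
      have heM' : e ∉ M' := by
        intro h
        obtain ⟨a, ha⟩ := hne
        exact (Finset.disjoint_left.mp (hdisj e h)) ha ha
      refine ⟨insert e M', ?_, ?_⟩
      · simp only [hP, mem_filter, mem_powerset, not_not]
        refine ⟨⟨?_, ?_, ?_⟩, Finset.mem_insert_self e M'⟩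
        · intro f hf
          rcases Finset.mem_insert.mp hf with rfl | hf
          · exact he
          · have h2 := hsub hf
            simp only [removeVerts, mem_filter] at h2
            exact h2.1
        · rw [Finset.card_insert_of_notMem heM', hcard]
        · intro a ha b hb hab
          rcases Finset.mem_insert.mp ha with h1 | h1 <;>
            rcases Finset.mem_insert.mp hb with h2 | h2
          · exact absurd (h1.trans h2.symm) hab
          · exact h1 ▸ (hdisj b h2).symm
          · exact h2 ▸ (hdisj a h1)
          · exact hmatch a h1 b h2 hab
      · rw [Finset.erase_insert heM']

lemma removeVerts_wf {H : FinHypergraph α} (hWF : H.WellFormed) (S : Finset α) :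
    (H.removeVerts S).WellFormed := by
  intro f hf
  simp only [removeVerts, mem_filter] at hf ⊢
  intro a ha
  exact Finset.mem_sdiff.mpr ⟨hWF f hf.1 ha, fun haS => (Finset.disjoint_left.mp hf.2) ha haS⟩

lemma removeVerts_uniform {H : FinHypergraph α} {r : ℕ} (hU : H.Uniform r) (S : Finset α) :
    (H.removeVerts S).Uniform r := by
  intro f hf
  simp only [removeVerts, mem_filter] at hf
  exact hU f hf.1

lemma matchPoly_edge_rec {H : FinHypergraph α} {r : ℕ} (hWF : H.WellFormed)
    (hU : H.Uniform r) (hr : 1 ≤ r) {e : Finset α} (he : e ∈ H.edges) (x : ℝ) :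
    H.matchPoly r x = (FinHypergraph.mk H.verts (H.edges.erase e)).matchPoly r x
      - (H.removeVerts e).matchPoly r x := by
  classical
  have hecard : e.card = r := hU e he
  have hesub : e ⊆ H.verts := hWF e he
  have hne : e.Nonempty := by
    rw [← Finset.card_pos, hecard]; omega
  have hrn : r ≤ H.verts.card := hecard ▸ Finset.card_le_card hesub
  set n := H.verts.card with hn
  have hn1 : 1 ≤ n := le_trans hr hrn
  -- graphs
  set H' : FinHypergraph α := ⟨H.verts, H.edges.erase e⟩ with hH'
  have hH'wf : H'.WellFormed := fun f hf => hWF f (Finset.mem_of_mem_erase hf)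
  have hH'u : H'.Uniform r := fun f hf => hU f (Finset.mem_of_mem_erase hf)
  set H'' := H.removeVerts e with hH''
  have hH''wf : H''.WellFormed := removeVerts_wf hWF e
  have hH''u : H''.Uniform r := removeVerts_uniform hU e
  have hn'' : H''.verts.card = n - r := by
    simp only [hH'', removeVerts]
    rw [Finset.card_sdiff_of_subset hesub, hecard]
  -- expand matchPoly H
  have expand : H.matchPoly r x
      = ∑ k ∈ Finset.range (n + 1), (-1:ℝ)^k * (H.matchCount k) * x ^ (n - r * k) := rfl
  rw [expand, Finset.sum_range_succ']
  -- the k+1 terms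
  have step : ∀ k, (-1:ℝ)^(k+1) * (H.matchCount (k+1)) * x ^ (n - r * (k+1))
      = (-1:ℝ)^(k+1) * (H'.matchCount (k+1)) * x ^ (n - r * (k+1))
        - (-1:ℝ)^k * (H''.matchCount k) * x ^ ((n - r) - r * k) := by
    intro k
    rw [matchCount_rec he hne k]
    have hexp : n - r * (k+1) = (n - r) - r * k := by
      rw [Nat.mul_succ]; omega
    rw [hexp]
    push_cast
    ring
  rw [Finset.sum_congr rfl (fun k _ => step k), Finset.sum_sub_distrib]
  have hfirst : (∑ k ∈ Finset.range n,
        (-1:ℝ)^(k+1) * (H'.matchCount (k+1)) * x ^ (n - r * (k+1)))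
      + (-1:ℝ)^0 * (H.matchCount 0) * x ^ (n - r * 0)
      = H'.matchPoly r x := by
    rw [matchCount_zero]
    have : H'.matchPoly r x = ∑ k ∈ Finset.range (n + 1),
        (-1:ℝ)^k * (H'.matchCount k) * x ^ (n - r * k) := rfl
    rw [this, Finset.sum_range_succ', matchCount_zero]
  have hsecond : (∑ k ∈ Finset.range n,
        (-1:ℝ)^k * (H''.matchCount k) * x ^ ((n - r) - r * k))
      = H''.matchPoly r x := by
    have h2 : n = (n-1)+1 := by omega
    rw [matchPoly_eq_sum hH''wf hH''u hr (N := n - 1) (by omega) x, hn'', ← h2]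
  linarith [hfirst, hsecond]

end FinHypergraph
end Aux2
section Aux3
open Finset
variable {α : Type*}
namespace FinHypergraph

lemma matchPoly_map {H : FinHypergraph α} (hWF : H.WellFormed) {f : α → α}
    (hf : Set.InjOn f H.verts) (r : ℕ) (x : ℝ) :
    (FinHypergraph.mk (H.verts.image f) (H.edges.image (Finset.image f))).matchPoly r x
      = H.matchPoly r x := by
  classical
  have hedge_inj : ∀ e1 ⊆ H.verts, ∀ e2 ⊆ H.verts,
      e1.image f = e2.image f → e1 = e2 := by
    intro e1 h1 e2 h2 heq
    ext a
    constructor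
    · intro ha
      have : f a ∈ e2.image f := heq ▸ Finset.mem_image_of_mem f ha
      obtain ⟨b, hb, hba⟩ := Finset.mem_image.mp this
      exact (hf (h2 hb) (h1 ha) hba) ▸ hb
    · intro ha
      have : f a ∈ e1.image f := heq ▸ Finset.mem_image_of_mem f ha
      obtain ⟨b, hb, hba⟩ := Finset.mem_image.mp this
      exact (hf (h1 hb) (h2 ha) hba) ▸ hb
  have hdisj_iff : ∀ e1 ⊆ H.verts, ∀ e2 ⊆ H.verts,
      (Disjoint (e1.image f) (e2.image f) ↔ Disjoint e1 e2) := by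
    intro e1 h1 e2 h2
    constructor
    · intro hd
      rw [Finset.disjoint_left] at hd ⊢
      intro a ha1 ha2
      exact hd (Finset.mem_image_of_mem f ha1) (Finset.mem_image_of_mem f ha2)
    · intro hd
      rw [Finset.disjoint_left] at hd ⊢
      rintro b hb1 hb2
      obtain ⟨a1, ha1, rfl⟩ := Finset.mem_image.mp hb1
      obtain ⟨a2, ha2, hEq⟩ := Finset.mem_image.mp hb2
      exact hd ha1 ((hf (h2 ha2) (h1 ha1) hEq) ▸ ha2)
  have hcardv : (H.verts.image f).card = H.verts.card :=
    Finset.card_image_of_injOn hf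
  have hcount : ∀ k, (FinHypergraph.mk (H.verts.image f)
      (H.edges.image (Finset.image f))).matchCount k = H.matchCount k := by
    intro k
    unfold matchCount
    symm
    apply Finset.card_bij (fun M _ => M.image (Finset.image f))
    · rintro M hM
      simp only [mem_filter, mem_powerset] at hM ⊢
      obtain ⟨hsub, hcard, hmatch⟩ := hM
      refine ⟨Finset.image_subset_image hsub, ?_, ?_⟩
      · rw [Finset.card_image_of_injOn, hcard]
        intro e1 h1 e2 h2 heq
        exact hedge_inj e1 (hWF e1 (hsub h1)) e2 (hWF e2 (hsub h2)) heq
      · rintro a' ha' b' hb' hab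
        obtain ⟨e1, he1, rfl⟩ := Finset.mem_image.mp ha'
        obtain ⟨e2, he2, rfl⟩ := Finset.mem_image.mp hb'
        have hne : e1 ≠ e2 := by rintro rfl; exact hab rfl
        exact (hdisj_iff e1 (hWF e1 (hsub he1)) e2 (hWF e2 (hsub he2))).mpr
          (hmatch e1 he1 e2 he2 hne)
    · rintro M1 hM1 M2 hM2 hEq
      simp only [mem_filter, mem_powerset] at hM1 hM2
      ext e
      constructor
      · intro heM
        have : e.image f ∈ M2.image (Finset.image f) :=
          hEq ▸ Finset.mem_image_of_mem _ heM
        obtain ⟨e2, he2, heq2⟩ := Finset.mem_image.mp this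
        exact (hedge_inj e2 (hWF e2 (hM2.1 he2)) e (hWF e (hM1.1 heM)) heq2) ▸ he2
      · intro heM
        have : e.image f ∈ M1.image (Finset.image f) :=
          hEq ▸ Finset.mem_image_of_mem _ heM
        obtain ⟨e2, he2, heq2⟩ := Finset.mem_image.mp this
        exact (hedge_inj e2 (hWF e2 (hM1.1 he2)) e (hWF e (hM2.1 heM)) heq2) ▸ he2
    · rintro M' hM'
      simp only [mem_filter, mem_powerset] at hM'
      obtain ⟨hsub, hcard, hmatch⟩ := hM'
      refine ⟨H.edges.filter (fun e => e.image f ∈ M'), ?_, ?_⟩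
      · have himg : (H.edges.filter (fun e => e.image f ∈ M')).image (Finset.image f)
            = M' := by
          ext b
          simp only [Finset.mem_image, mem_filter]
          constructor
          · rintro ⟨e, ⟨-, h2⟩, rfl⟩; exact h2
          · intro hb
            obtain ⟨e, he, rfl⟩ := Finset.mem_image.mp (hsub hb)
            exact ⟨e, ⟨he, hb⟩, rfl⟩
        have hinjM : Set.InjOn (Finset.image f)
            (H.edges.filter (fun e => e.image f ∈ M') : Finset (Finset α)) := by
          intro e1 h1 e2 h2 heq
          simp only [Finset.coe_filter, Set.mem_setOf_eq] at h1 h2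
          exact hedge_inj e1 (hWF e1 h1.1) e2 (hWF e2 h2.1) heq
        simp only [mem_filter, mem_powerset]
        refine ⟨Finset.filter_subset _ _, ?_, ?_⟩
        · have h3 := congrArg Finset.card himg
          rw [Finset.card_image_of_injOn hinjM] at h3
          rw [h3, hcard]
        · intro e1 h1 e2 h2 hne
          simp only [mem_filter] at h1 h2
          have : e1.image f ≠ e2.image f := by
            intro hEq
            exact hne (hedge_inj e1 (hWF e1 h1.1) e2 (hWF e2 h2.1) hEq)
          exact (hdisj_iff e1 (hWF e1 h1.1) e2 (hWF e2 h2.1)).mp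
            (hmatch _ h1.2 _ h2.2 this)
      · ext b
        simp only [Finset.mem_image, mem_filter]
        constructor
        · rintro ⟨e, ⟨-, h2⟩, rfl⟩; exact h2
        · intro hb
          obtain ⟨e, he, rfl⟩ := Finset.mem_image.mp (hsub hb)
          exact ⟨e, ⟨he, hb⟩, rfl⟩
  unfold matchPoly
  simp only [hcount, hcardv]

end FinHypergraph
end Aux3
section Aux4
open Finset
variable {α : Type*}
namespace FinHypergraph

/-- The canonical attachment of a pendant path of length `s` along `w`. -/
def attach (H : FinHypergraph α) (r : ℕ) (w : ℕ → α) (s : ℕ) : FinHypergraph α :=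
  ⟨H.verts ∪ (Finset.Icc 1 (s * (r - 1))).image w, H.edges ∪ loosePathEdges r s w⟩

/-- `w` is a good witness for attaching a pendant path of length `p` at `z`. -/
def GoodW (H : FinHypergraph α) (r : ℕ) (z : α) (w : ℕ → α) (p : ℕ) : Prop :=
  z ∈ H.verts ∧ w 0 = z ∧ Set.InjOn w (Set.Iic (p * (r - 1))) ∧
    ∀ j, 1 ≤ j → j ≤ p * (r - 1) → w j ∉ H.verts

lemma GoodW.mono {H : FinHypergraph α} {r : ℕ} {z : α} {w : ℕ → α} {p : ℕ}
    (hg : GoodW H r z w p) {s : ℕ} (hs : s ≤ p) : GoodW H r z w s := by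
  obtain ⟨h1, h2, h3, h4⟩ := hg
  have hle : s * (r - 1) ≤ p * (r - 1) := Nat.mul_le_mul_right _ hs
  exact ⟨h1, h2, h3.mono (fun j hj => le_trans hj hle),
    fun j hj1 hj2 => h4 j hj1 (le_trans hj2 hle)⟩

lemma isPendantPathAttach_iff {H T' : FinHypergraph α} {r : ℕ} {z : α} {p : ℕ} :
    IsPendantPathAttach r H z p T' ↔ ∃ w, GoodW H r z w p ∧ T' = attach H r w p := by
  constructor
  · rintro ⟨hz, w, h0, hinj, hnew, hv, he⟩
    exact ⟨w, ⟨hz, h0, hinj, hnew⟩, FinHypergraph.ext' hv he⟩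
  · rintro ⟨w, ⟨hz, h0, hinj, hnew⟩, rfl⟩
    exact ⟨hz, w, h0, hinj, hnew, rfl, rfl⟩

lemma attach_zero (H : FinHypergraph α) (r : ℕ) (w : ℕ → α) : attach H r w 0 = H := by
  apply FinHypergraph.ext' <;> simp [attach, loosePathEdges]

-- helpers about injective images
section InjOnImage

lemma mem_image_iff_of_injOn {w : ℕ → α} {N : ℕ} (hw : Set.InjOn w (Set.Iic N))
    {j : ℕ} (hj : j ≤ N) {A : Finset ℕ}
    (hA : ∀ a ∈ A, a ≤ N) : w j ∈ A.image w ↔ j ∈ A := by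
  constructor
  · intro h
    obtain ⟨a, ha, hEq⟩ := Finset.mem_image.mp h
    exact (hw (Set.mem_Iic.mpr (hA a ha)) (Set.mem_Iic.mpr hj) hEq) ▸ ha
  · exact Finset.mem_image_of_mem w

lemma image_sdiff_of_injOn {w : ℕ → α} {N : ℕ} (hw : Set.InjOn w (Set.Iic N))
    {A B : Finset ℕ} (hA : ∀ a ∈ A, a ≤ N)
    (hB : ∀ b ∈ B, b ≤ N) : (A.image w) \ (B.image w) = (A \ B).image w := by
  ext b
  simp only [Finset.mem_sdiff, Finset.mem_image]
  constructor
  · rintro ⟨⟨a, ha, rfl⟩, h2⟩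
    exact ⟨a, ⟨ha, fun haB => h2 ⟨a, haB, rfl⟩⟩, rfl⟩
  · rintro ⟨a, ⟨ha1, ha2⟩, rfl⟩
    refine ⟨⟨a, ha1, rfl⟩, ?_⟩
    rintro ⟨a', ha', hEq⟩
    exact ha2 ((hw (Set.mem_Iic.mpr (hB a' ha')) (Set.mem_Iic.mpr (hA a ha1)) hEq) ▸ ha')

lemma disjoint_image_of_injOn {w : ℕ → α} {N : ℕ} (hw : Set.InjOn w (Set.Iic N))
    {A B : Finset ℕ} (hA : ∀ a ∈ A, a ≤ N)
    (hB : ∀ b ∈ B, b ≤ N) (hAB : Disjoint A B) :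
    Disjoint (A.image w) (B.image w) := by
  rw [Finset.disjoint_left]
  rintro b hb1 hb2
  obtain ⟨a, ha, rfl⟩ := Finset.mem_image.mp hb1
  obtain ⟨a', ha', hEq⟩ := Finset.mem_image.mp hb2
  have := (hw (Set.mem_Iic.mpr (hB a' ha')) (Set.mem_Iic.mpr (hA a ha)) hEq) ▸ ha'
  exact Finset.disjoint_left.mp hAB ha this

end InjOnImage

lemma loosePathEdges_succ (r s : ℕ) (w : ℕ → α) :
    loosePathEdges r (s + 1) w
      = insert ((Finset.Icc (s * (r-1)) ((s+1) * (r-1))).image w) (loosePathEdges r s w) := by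
  unfold loosePathEdges
  rw [Finset.range_add_one, Finset.image_insert]

lemma mem_loosePathEdges {r s : ℕ} {w : ℕ → α} {e : Finset α} :
    e ∈ loosePathEdges r s w ↔ ∃ i < s, e = (Finset.Icc (i * (r-1)) ((i+1) * (r-1))).image w := by
  unfold loosePathEdges
  simp only [Finset.mem_image, Finset.mem_range]
  exact ⟨fun ⟨i, h1, h2⟩ => ⟨i, h1, h2.symm⟩, fun ⟨i, h1, h2⟩ => ⟨i, h1, h2.symm⟩⟩

section Attach
variable {H : FinHypergraph α} {r : ℕ} {z : α} {w : ℕ → α} {p : ℕ}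

lemma attach_wf (hWF : H.WellFormed) (hr : 2 ≤ r) (hg : GoodW H r z w p) :
    (attach H r w p).WellFormed := by
  obtain ⟨hz, h0, hinj, hnew⟩ := hg
  intro e he
  rcases Finset.mem_union.mp he with he | he
  · exact subset_trans (hWF e he) (Finset.subset_union_left)
  · obtain ⟨i, hi, rfl⟩ := mem_loosePathEdges.mp he
    intro a ha
    obtain ⟨j, hj, rfl⟩ := Finset.mem_image.mp ha
    rw [Finset.mem_Icc] at hj
    rcases Nat.eq_zero_or_pos j with rfl | hj0
    · exact Finset.mem_union_left _ (h0 ▸ hz)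
    · apply Finset.mem_union_right
      apply Finset.mem_image_of_mem
      rw [Finset.mem_Icc]
      exact ⟨hj0, le_trans hj.2 (Nat.mul_le_mul_right _ hi)⟩

lemma attach_uniform (hU : H.Uniform r) (hr : 2 ≤ r) (hg : GoodW H r z w p) :
    (attach H r w p).Uniform r := by
  obtain ⟨hz, h0, hinj, hnew⟩ := hg
  intro e he
  rcases Finset.mem_union.mp he with he | he
  · exact hU e he
  · obtain ⟨i, hi, rfl⟩ := mem_loosePathEdges.mp he
    rw [Finset.card_image_of_injOn, Nat.card_Icc]
    · have : (i+1) * (r-1) = i * (r-1) + (r-1) := by ring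
      omega
    · apply hinj.mono
      intro j hj
      simp only [Finset.coe_Icc, Set.mem_Icc] at hj
      exact Set.mem_Iic.mpr (le_trans hj.2 (Nat.mul_le_mul_right _ hi))

end Attach
end FinHypergraph
end Aux4
section Aux5
open Finset
variable {α : Type*}
namespace FinHypergraph

variable {H : FinHypergraph α} {r : ℕ} {z : α} {w : ℕ → α}

lemma matchPoly_attach_one (hWF : H.WellFormed) (hU : H.Uniform r) (hr : 2 ≤ r)
    (hg : GoodW H r z w 1) (x : ℝ) :
    (attach H r w 1).matchPoly r x
      = x ^ (r - 1) * H.matchPoly r x - (H.removeVerts {z}).matchPoly r x := by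
  obtain ⟨hz, h0, hinj, hnew⟩ := hg
  have hR1 : 1 ≤ r - 1 := by omega
  set e : Finset α := (Finset.Icc (0 * (r-1)) ((0+1) * (r-1))).image w with he_def
  have heIcc : (Finset.Icc (0 * (r-1)) ((0+1) * (r-1))) = Finset.Icc 0 (1 * (r-1)) := by
    norm_num
  have hpath : loosePathEdges r 1 w = {e} := by
    unfold loosePathEdges
    rw [show Finset.range 1 = {0} from rfl, Finset.image_singleton]
  have hz_mem_e : z ∈ e := by
    rw [he_def, ← h0]
    exact Finset.mem_image_of_mem w (by rw [Finset.mem_Icc]; omega)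
  have hw1_mem_e : w 1 ∈ e := by
    exact Finset.mem_image_of_mem w (by rw [Finset.mem_Icc]; omega)
  have h_e_not : e ∉ H.edges := fun h => hnew 1 le_rfl (by omega) (hWF e h hw1_mem_e)
  have hA_wf := attach_wf hWF hr ⟨hz, h0, hinj, hnew⟩
  have hA_u := attach_uniform hU hr ⟨hz, h0, hinj, hnew⟩
  have heA : e ∈ (attach H r w 1).edges := by
    apply Finset.mem_union_right
    rw [hpath]; exact Finset.mem_singleton_self e
  rw [matchPoly_edge_rec hA_wf hA_u (by omega) heA x]
  have herase : (attach H r w 1).edges.erase e = H.edges := by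
    show (H.edges ∪ loosePathEdges r 1 w).erase e = H.edges
    rw [hpath, Finset.union_comm, ← Finset.insert_eq, Finset.erase_insert h_e_not]
  have hSdisj : Disjoint H.verts ((Finset.Icc 1 (1 * (r-1))).image w) := by
    rw [Finset.disjoint_right]
    rintro a ha haH
    obtain ⟨j, hj, rfl⟩ := Finset.mem_image.mp ha
    rw [Finset.mem_Icc] at hj
    exact hnew j hj.1 hj.2 haH
  have hScard : ((Finset.Icc 1 (1 * (r-1))).image w).card = r - 1 := by
    rw [Finset.card_image_of_injOn, Nat.card_Icc]
    · omega
    · apply hinj.mono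
      intro j hj
      simp only [Finset.coe_Icc, Set.mem_Icc] at hj
      exact Set.mem_Iic.mpr hj.2
  have hfirst : (FinHypergraph.mk (attach H r w 1).verts ((attach H r w 1).edges.erase e)).matchPoly r x
      = x ^ (r-1) * H.matchPoly r x := by
    rw [← hScard]
    exact matchPoly_isolated hWF hU (by omega) hSdisj rfl herase x
  have hremove : (attach H r w 1).removeVerts e = H.removeVerts {z} := by
    apply FinHypergraph.ext'
    · show (H.verts ∪ (Finset.Icc 1 (1 * (r-1))).image w) \ e = H.verts \ {z}
      ext a
      simp only [Finset.mem_sdiff, Finset.mem_union, Finset.mem_singleton]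
      constructor
      · rintro ⟨h1 | h1, h2⟩
        · refine ⟨h1, ?_⟩
          rintro rfl
          exact h2 hz_mem_e
        · exfalso
          obtain ⟨j, hj, rfl⟩ := Finset.mem_image.mp h1
          rw [Finset.mem_Icc] at hj
          exact h2 (Finset.mem_image_of_mem w (by rw [Finset.mem_Icc]; omega))
      · rintro ⟨h1, h2⟩
        refine ⟨Or.inl h1, fun hae => ?_⟩
        obtain ⟨j, hj, hEq⟩ := Finset.mem_image.mp hae
        rw [Finset.mem_Icc] at hj
        rcases Nat.eq_zero_or_pos j with rfl | hj0
        · exact h2 (by rw [← hEq, h0])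
        · exact hnew j hj0 (by omega) (hEq ▸ h1)
    · show (H.edges ∪ loosePathEdges r 1 w).filter (fun g => Disjoint g e)
        = H.edges.filter (fun g => Disjoint g {z})
      rw [hpath, Finset.filter_union]
      have hee : ({e} : Finset (Finset α)).filter (fun g => Disjoint g e) = ∅ := by
        rw [Finset.filter_singleton, if_neg]
        intro hd
        exact (Finset.disjoint_left.mp hd) hz_mem_e hz_mem_e
      rw [hee, Finset.union_empty]
      apply Finset.filter_congr
      intro g hg
      simp only [Finset.disjoint_singleton_right]
      constructor
      · intro hd
        exact fun hzg => (Finset.disjoint_left.mp hd) hzg hz_mem_e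
      · intro hzg
        rw [Finset.disjoint_left]
        intro a hag hae
        obtain ⟨j, hj, hEq⟩ := Finset.mem_image.mp hae
        rw [Finset.mem_Icc] at hj
        rcases Nat.eq_zero_or_pos j with rfl | hj0
        · exact hzg (by rw [← h0, hEq]; exact hag)
        · exact hnew j hj0 (by omega) (hEq ▸ hWF g hg hag)
  rw [hfirst, hremove]

lemma matchPoly_attach_two (hWF : H.WellFormed) (hU : H.Uniform r) (hr : 2 ≤ r)
    {s : ℕ} (hg : GoodW H r z w (s + 2)) (x : ℝ) :
    (attach H r w (s + 2)).matchPoly r x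
      = x ^ (r - 1) * (attach H r w (s + 1)).matchPoly r x
        - x ^ (r - 2) * (attach H r w s).matchPoly r x := by
  obtain ⟨hz, h0, hinj, hnew⟩ := hg
  have hR1 : 1 ≤ r - 1 := by omega
  have m1 : (s + 1) * (r-1) = s * (r-1) + (r-1) := by ring
  have m2 : (s + 2) * (r-1) = s * (r-1) + (r-1) + (r-1) := by ring
  have m3 : (s + 1 + 1) * (r-1) = s * (r-1) + (r-1) + (r-1) := by ring
  set K := s * (r - 1) with hK
  set e : Finset α := (Finset.Icc ((s+1) * (r-1)) ((s+1+1) * (r-1))).image w with he_def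
  have hpath : loosePathEdges r (s+2) w = insert e (loosePathEdges r (s+1) w) := by
    rw [show s + 2 = (s+1) + 1 from rfl, loosePathEdges_succ]
  have hbound : ∀ j ∈ Finset.Icc ((s+1) * (r-1)) ((s+1+1) * (r-1)), j ≤ (s+2) * (r-1) := by
    intro j hj
    rw [Finset.mem_Icc] at hj
    have : (s+1+1) * (r-1) = (s+2) * (r-1) := by ring
    omega
  -- a generic membership fact: elements of e have indices ≥ (s+1)(r-1) ≥ 1
  have h_e_new : ∀ a ∈ e, a ∉ H.verts := by
    rintro a ha haH
    obtain ⟨j, hj, rfl⟩ := Finset.mem_image.mp ha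
    have hj2 := hbound j hj
    rw [Finset.mem_Icc] at hj
    exact hnew j (by simp only [m1, m2, m3] at hj; omega) hj2 haH
  -- e is not an edge of `attach H r w (s+1)`
  have hkey : w ((s+1+1) * (r-1)) ∈ e :=
    Finset.mem_image_of_mem w (by rw [Finset.mem_Icc]; simp only [m1, m2, m3]; omega)
  have h_e_not : e ∉ H.edges ∪ loosePathEdges r (s+1) w := by
    intro h
    rcases Finset.mem_union.mp h with h | h
    · exact h_e_new _ hkey (hWF e h hkey)
    · obtain ⟨i, hi, hEq⟩ := mem_loosePathEdges.mp h
      have : w ((s+1+1) * (r-1)) ∈ (Finset.Icc (i * (r-1)) ((i+1) * (r-1))).image w := by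
        rw [← hEq]; exact hkey
      obtain ⟨j, hj, hEq2⟩ := Finset.mem_image.mp this
      rw [Finset.mem_Icc] at hj
      have hjle : j ≤ (s+2) * (r-1) := by
        have h3 : (i+1) * (r-1) ≤ (s+1) * (r-1) := Nat.mul_le_mul_right _ (by omega)
        have h4 : (s+1) * (r-1) ≤ (s+2) * (r-1) := Nat.mul_le_mul_right _ (by omega)
        omega
      have := hinj (Set.mem_Iic.mpr hjle)
        (Set.mem_Iic.mpr (by rw [show (s+1+1) * (r-1) = (s+2)*(r-1) from by ring])) hEq2
      have h5 : (i+1) * (r-1) ≤ (s+1) * (r-1) := Nat.mul_le_mul_right _ (by omega)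
      rw [this] at hj
      rw [show (s+1+1) * (r-1) = (s+2)*(r-1) from by ring] at hj
      simp only [m1, m2, m3] at h5
      simp only [m1, m2, m3] at hj
      omega
  -- facts about attach graphs
  have hA2wf := attach_wf hWF hr ⟨hz, h0, hinj, hnew⟩
  have hA2u := attach_uniform hU hr ⟨hz, h0, hinj, hnew⟩
  have hg1 : GoodW H r z w (s+1) := GoodW.mono ⟨hz, h0, hinj, hnew⟩ (by omega)
  have hg0 : GoodW H r z w s := GoodW.mono ⟨hz, h0, hinj, hnew⟩ (by omega)
  have hA1wf := attach_wf hWF hr hg1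
  have hA1u := attach_uniform hU hr hg1
  have hA0wf := attach_wf hWF hr hg0
  have hA0u := attach_uniform hU hr hg0
  have heA : e ∈ (attach H r w (s+2)).edges := by
    apply Finset.mem_union_right
    rw [hpath]; exact Finset.mem_insert_self _ _
  rw [matchPoly_edge_rec hA2wf hA2u (by omega) heA x]
  have herase : (attach H r w (s+2)).edges.erase e = (attach H r w (s+1)).edges := by
    show (H.edges ∪ loosePathEdges r (s+2) w).erase e = (attach H r w (s+1)).edges
    rw [hpath, Finset.union_insert, Finset.erase_insert h_e_not]
    rfl
  -- the S1 decomposition for the first term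
  set S1 : Finset α := (Finset.Icc ((s+1) * (r-1) + 1) ((s+1+1) * (r-1))).image w with hS1
  have hIccsplit1 : Finset.Icc 1 ((s+2) * (r-1))
      = Finset.Icc 1 ((s+1) * (r-1)) ∪ Finset.Icc ((s+1) * (r-1) + 1) ((s+1+1) * (r-1)) := by
    ext j
    simp only [Finset.mem_Icc, Finset.mem_union]
    simp only [m1, m2, m3]
    omega
  have hv1 : (attach H r w (s+2)).verts = (attach H r w (s+1)).verts ∪ S1 := by
    show H.verts ∪ (Finset.Icc 1 ((s+2) * (r-1))).image w
      = (H.verts ∪ (Finset.Icc 1 ((s+1) * (r-1))).image w) ∪ S1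
    rw [hIccsplit1, Finset.image_union, Finset.union_assoc]
  have hdisjHS : ∀ (A : Finset ℕ), (∀ a ∈ A, 1 ≤ a ∧ a ≤ (s+2) * (r-1)) →
      Disjoint H.verts (A.image w) := by
    intro A hA
    rw [Finset.disjoint_right]
    rintro a ha haH
    obtain ⟨j, hj, rfl⟩ := Finset.mem_image.mp ha
    exact hnew j (hA j hj).1 (hA j hj).2 haH
  have hd1 : Disjoint (attach H r w (s+1)).verts S1 := by
    show Disjoint (H.verts ∪ (Finset.Icc 1 ((s+1) * (r-1))).image w) S1
    rw [Finset.disjoint_union_left]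
    constructor
    · apply hdisjHS
      intro a ha
      rw [Finset.mem_Icc] at ha
      simp only [m1, m2, m3] at ha ⊢
      omega
    · apply disjoint_image_of_injOn hinj
      · intro a ha; rw [Finset.mem_Icc] at ha; simp only [m1, m2, m3] at ha; simp only [m1, m2, m3]; omega
      · intro a ha; rw [Finset.mem_Icc] at ha; simp only [m1, m2, m3] at ha; simp only [m1, m2, m3]; omega
      · rw [Finset.disjoint_left]
        intro j hj1 hj2
        rw [Finset.mem_Icc] at hj1 hj2
        simp only [m1, m2, m3] at hj1; simp only [m1, m2, m3] at hj2
        omega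
  have hScard1 : S1.card = r - 1 := by
    rw [hS1, Finset.card_image_of_injOn, Nat.card_Icc]
    · simp only [m1, m2, m3]; omega
    · apply hinj.mono
      intro j hj
      simp only [Finset.coe_Icc, Set.mem_Icc] at hj
      simp only [m1, m2, m3] at hj
      rw [Set.mem_Iic]; simp only [m1, m2, m3]
      omega
  have hfirst : (FinHypergraph.mk (attach H r w (s+2)).verts
        ((attach H r w (s+2)).edges.erase e)).matchPoly r x
      = x ^ (r-1) * (attach H r w (s+1)).matchPoly r x := by
    rw [← hScard1]
    exact matchPoly_isolated (H2 := FinHypergraph.mk (attach H r w (s+2)).verts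
      ((attach H r w (s+2)).edges.erase e)) hA1wf hA1u (by omega) hd1 hv1 herase x
  rw [hfirst]
  -- now the removeVerts part
  set e' : Finset α := (Finset.Icc (s * (r-1)) ((s+1) * (r-1))).image w with he'_def
  set S2 : Finset α := (Finset.Icc (s * (r-1) + 1) ((s+1) * (r-1) - 1)).image w with hS2
  have hbig : ∀ a ∈ Finset.Icc ((s+1) * (r-1)) ((s+1+1) * (r-1)), a ≤ (s+2) * (r-1) := by
    intro a ha; rw [Finset.mem_Icc] at ha; simp only [m1, m2, m3] at ha; simp only [m1, m2, m3]; omega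
  have hv2 : ((attach H r w (s+2)).removeVerts e).verts = (attach H r w s).verts ∪ S2 := by
    show (H.verts ∪ (Finset.Icc 1 ((s+2) * (r-1))).image w) \ e
      = (H.verts ∪ (Finset.Icc 1 (s * (r-1))).image w) ∪ S2
    rw [Finset.union_sdiff_distrib]
    have h1 : H.verts \ e = H.verts := by
      rw [Finset.sdiff_eq_self_iff_disjoint, Finset.disjoint_left]
      intro a ha hae
      exact h_e_new a hae ha
    have h2 : (Finset.Icc 1 ((s+2) * (r-1))).image w \ e
        = (Finset.Icc 1 ((s+2) * (r-1)) \ Finset.Icc ((s+1) * (r-1)) ((s+1+1) * (r-1))).image w := by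
      rw [he_def]
      apply image_sdiff_of_injOn hinj
      · intro a ha; rw [Finset.mem_Icc] at ha; omega
      · exact hbig
    have h3 : Finset.Icc 1 ((s+2) * (r-1)) \ Finset.Icc ((s+1) * (r-1)) ((s+1+1) * (r-1))
        = Finset.Icc 1 (s * (r-1)) ∪ Finset.Icc (s * (r-1) + 1) ((s+1) * (r-1) - 1) := by
      ext j
      simp only [Finset.mem_sdiff, Finset.mem_Icc, Finset.mem_union]
      simp only [m1, m2, m3]
      omega
    rw [h1, h2, h3, Finset.image_union, Finset.union_assoc]
  have he2 : ((attach H r w (s+2)).removeVerts e).edges = (attach H r w s).edges := by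
    show (H.edges ∪ loosePathEdges r (s+2) w).filter (fun g => Disjoint g e)
      = H.edges ∪ loosePathEdges r s w
    rw [hpath, show s + 1 = s + 1 from rfl, loosePathEdges_succ, Finset.filter_union]
    have hH : H.edges.filter (fun g => Disjoint g e) = H.edges := by
      apply Finset.filter_true_of_mem
      intro g hg
      rw [Finset.disjoint_right]
      intro a hae hag
      exact h_e_new a hae (hWF g hg hag)
    have hne_e : ¬ Disjoint e e := by
      intro hd
      exact (Finset.disjoint_left.mp hd) hkey hkey
    have hne_e' : ¬ Disjoint e' e := by
      intro hd
      have hmem : w ((s+1) * (r-1)) ∈ e' :=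
        Finset.mem_image_of_mem w (by rw [Finset.mem_Icc]; simp only [m1, m2, m3]; omega)
      have hmem2 : w ((s+1) * (r-1)) ∈ e :=
        Finset.mem_image_of_mem w (by rw [Finset.mem_Icc]; simp only [m1, m2, m3]; omega)
      exact (Finset.disjoint_left.mp hd) hmem hmem2
    rw [Finset.filter_insert, if_neg hne_e, Finset.filter_insert, if_neg hne_e']
    have hP : (loosePathEdges r s w).filter (fun g => Disjoint g e) = loosePathEdges r s w := by
      apply Finset.filter_true_of_mem
      intro g hg
      obtain ⟨i, hi, rfl⟩ := mem_loosePathEdges.mp hg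
      rw [he_def]
      apply disjoint_image_of_injOn hinj
      · intro a ha
        rw [Finset.mem_Icc] at ha
        have h4 : (i+1) * (r-1) ≤ s * (r-1) := Nat.mul_le_mul_right _ (by omega)
        simp only [m1, m2, m3]; omega
      · exact hbig
      · rw [Finset.disjoint_left]
        intro j hj1 hj2
        rw [Finset.mem_Icc] at hj1 hj2
        have h4 : (i+1) * (r-1) ≤ s * (r-1) := Nat.mul_le_mul_right _ (by omega)
        simp only [m1, m2, m3] at hj2
        omega
    rw [hP, hH]
  have hd2 : Disjoint (attach H r w s).verts S2 := by
    show Disjoint (H.verts ∪ (Finset.Icc 1 (s * (r-1))).image w) S2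
    rw [Finset.disjoint_union_left]
    constructor
    · apply hdisjHS
      intro a ha
      rw [Finset.mem_Icc] at ha
      simp only [m1, m2, m3] at ha; simp only [m1, m2, m3]
      omega
    · apply disjoint_image_of_injOn hinj
      · intro a ha; rw [Finset.mem_Icc] at ha; simp only [m1, m2, m3]; omega
      · intro a ha; rw [Finset.mem_Icc] at ha; simp only [m1, m2, m3] at ha; simp only [m1, m2, m3]; omega
      · rw [Finset.disjoint_left]
        intro j hj1 hj2
        rw [Finset.mem_Icc] at hj1 hj2
        simp only [m1, m2, m3] at hj2
        omega
  have hScard2 : S2.card = r - 2 := by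
    rw [hS2, Finset.card_image_of_injOn, Nat.card_Icc]
    · simp only [m1, m2, m3]; omega
    · apply hinj.mono
      intro j hj
      simp only [Finset.coe_Icc, Set.mem_Icc] at hj
      simp only [m1, m2, m3] at hj
      rw [Set.mem_Iic]; simp only [m1, m2, m3]
      omega
  have hsecond : ((attach H r w (s+2)).removeVerts e).matchPoly r x
      = x ^ (r-2) * (attach H r w s).matchPoly r x := by
    rw [← hScard2]
    exact matchPoly_isolated hA0wf hA0u (by omega) hd2 hv2 he2 x
  rw [hsecond]

end FinHypergraph
end Aux5
section Aux6
open Finset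
variable {α : Type*}
namespace FinHypergraph

lemma loosePathEdges_map {r s : ℕ} {w w' : ℕ → α} {f : α → α}
    (hf : ∀ j ≤ s * (r-1), f (w j) = w' j) :
    (loosePathEdges r s w).image (Finset.image f) = loosePathEdges r s w' := by
  unfold loosePathEdges
  rw [Finset.image_image]
  apply Finset.image_congr
  intro i hi
  simp only [Finset.mem_coe, Finset.mem_range] at hi
  show Finset.image f ((Finset.Icc (i * (r-1)) ((i+1) * (r-1))).image w) = _
  rw [Finset.image_image]
  apply Finset.image_congr
  intro j hj
  simp only [Finset.mem_coe, Finset.mem_Icc] at hj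
  exact hf j (le_trans hj.2 (Nat.mul_le_mul_right _ (by omega)))

lemma matchPoly_attach2_relabel {H : FinHypergraph α} {r : ℕ} (hWF : H.WellFormed)
    (hU : H.Uniform r) (hr : 2 ≤ r)
    {z1 z2 : α} (hz2 : z2 ∈ H.verts) {w1 w2 w1' w2' : ℕ → α} {s t : ℕ}
    (hg1 : GoodW H r z1 w1 s) (hg2 : GoodW (attach H r w1 s) r z2 w2 t)
    (hg1' : GoodW H r z1 w1' s) (hg2' : GoodW (attach H r w1' s) r z2 w2' t) (x : ℝ) :
    (attach (attach H r w1 s) r w2 t).matchPoly r x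
      = (attach (attach H r w1' s) r w2' t).matchPoly r x := by
  classical
  obtain ⟨hz1, h10, h1inj, h1new⟩ := hg1
  obtain ⟨hz2', h20, h2inj, h2new⟩ := hg2
  obtain ⟨hz1'', h10', h1inj', h1new'⟩ := hg1'
  obtain ⟨hz2'', h20', h2inj', h2new'⟩ := hg2'
  set N1 := s * (r - 1) with hN1
  set N2 := t * (r - 1) with hN2
  -- the new vertices of the first path lie in the attach graph
  have hw1mem : ∀ j ≤ N1, w1 j ∈ (attach H r w1 s).verts := by
    intro j hj
    rcases Nat.eq_zero_or_pos j with rfl | hj0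
    · exact Finset.mem_union_left _ (h10 ▸ hz1)
    · exact Finset.mem_union_right _
        (Finset.mem_image_of_mem w1 (Finset.mem_Icc.mpr ⟨hj0, hj⟩))
  have hw1mem' : ∀ j ≤ N1, w1' j ∈ (attach H r w1' s).verts := by
    intro j hj
    rcases Nat.eq_zero_or_pos j with rfl | hj0
    · exact Finset.mem_union_left _ (h10' ▸ hz1)
    · exact Finset.mem_union_right _
        (Finset.mem_image_of_mem w1' (Finset.mem_Icc.mpr ⟨hj0, hj⟩))
  set f : α → α := fun a =>
    if h1 : ∃ j, j ∈ Finset.Icc 1 N1 ∧ w1 j = a then w1' h1.choose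
    else if h2 : ∃ j, j ∈ Finset.Icc 1 N2 ∧ w2 j = a then w2' h2.choose
    else a with hf_def
  have hfH : ∀ a ∈ H.verts, f a = a := by
    intro a ha
    simp only [hf_def]
    rw [dif_neg, dif_neg]
    · rintro ⟨j, hj, hEq⟩
      rw [Finset.mem_Icc] at hj
      exact h2new j hj.1 hj.2 (hEq ▸ Finset.mem_union_left _ ha)
    · rintro ⟨j, hj, hEq⟩
      rw [Finset.mem_Icc] at hj
      exact h1new j hj.1 hj.2 (hEq ▸ ha)
  have hf1 : ∀ j ≤ N1, f (w1 j) = w1' j := by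
    intro j hj
    rcases Nat.eq_zero_or_pos j with rfl | hj0
    · rw [h10, h10']
      exact hfH z1 hz1
    · have hex : ∃ k, k ∈ Finset.Icc 1 N1 ∧ w1 k = w1 j :=
        ⟨j, Finset.mem_Icc.mpr ⟨hj0, hj⟩, rfl⟩
      simp only [hf_def]
      rw [dif_pos hex]
      have hch := hex.choose_spec
      have : hex.choose = j := by
        apply h1inj (Set.mem_Iic.mpr (Finset.mem_Icc.mp hch.1).2) (Set.mem_Iic.mpr hj) hch.2
      rw [this]
  have hf2 : ∀ j ≤ N2, f (w2 j) = w2' j := by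
    intro j hj
    rcases Nat.eq_zero_or_pos j with rfl | hj0
    · rw [h20, h20']
      exact hfH z2 hz2
    · have hnot1 : ¬ ∃ k, k ∈ Finset.Icc 1 N1 ∧ w1 k = w2 j := by
        rintro ⟨k, hk, hEq⟩
        rw [Finset.mem_Icc] at hk
        exact h2new j hj0 hj (hEq ▸ hw1mem k hk.2)
      have hex : ∃ k, k ∈ Finset.Icc 1 N2 ∧ w2 k = w2 j :=
        ⟨j, Finset.mem_Icc.mpr ⟨hj0, hj⟩, rfl⟩
      simp only [hf_def]
      rw [dif_neg hnot1, dif_pos hex]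
      have hch := hex.choose_spec
      have : hex.choose = j := by
        apply h2inj (Set.mem_Iic.mpr (Finset.mem_Icc.mp hch.1).2) (Set.mem_Iic.mpr hj) hch.2
      rw [this]
  -- classification of vertices of the double attach
  have hclass : ∀ a ∈ (attach (attach H r w1 s) r w2 t).verts,
      a ∈ H.verts ∨ (∃ j, 1 ≤ j ∧ j ≤ N1 ∧ a = w1 j) ∨ (∃ j, 1 ≤ j ∧ j ≤ N2 ∧ a = w2 j) := by
    intro a ha
    rcases Finset.mem_union.mp ha with ha | ha
    · rcases Finset.mem_union.mp ha with ha | ha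
      · exact Or.inl ha
      · obtain ⟨j, hj, rfl⟩ := Finset.mem_image.mp ha
        rw [Finset.mem_Icc] at hj
        exact Or.inr (Or.inl ⟨j, hj.1, hj.2, rfl⟩)
    · obtain ⟨j, hj, rfl⟩ := Finset.mem_image.mp ha
      rw [Finset.mem_Icc] at hj
      exact Or.inr (Or.inr ⟨j, hj.1, hj.2, rfl⟩)
  have hval1' : ∀ j, 1 ≤ j → j ≤ N1 → w1' j ∉ H.verts := h1new'
  have hval2' : ∀ j, 1 ≤ j → j ≤ N2 → ∀ k ≤ N1, w2' j ≠ w1' k := by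
    intro j hj0 hj k hk hEq
    exact h2new' j hj0 hj (hEq ▸ hw1mem' k hk)
  have hval2H : ∀ j, 1 ≤ j → j ≤ N2 → w2' j ∉ H.verts := by
    intro j hj0 hj ha
    exact h2new' j hj0 hj (Finset.mem_union_left _ ha)
  have hinjf : Set.InjOn f ((attach (attach H r w1 s) r w2 t).verts : Set α) := by
    intro a ha b hb hab
    rw [Finset.mem_coe] at ha hb
    rcases hclass a ha with haH | ⟨j, hj0, hj, rfl⟩ | ⟨j, hj0, hj, rfl⟩ <;>
      rcases hclass b hb with hbH | ⟨k, hk0, hk, rfl⟩ | ⟨k, hk0, hk, rfl⟩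
    · rwa [hfH a haH, hfH b hbH] at hab
    · rw [hfH a haH, hf1 k hk] at hab
      exact absurd (hab ▸ haH) (hval1' k hk0 hk)
    · rw [hfH a haH, hf2 k hk] at hab
      exact absurd (hab ▸ haH) (hval2H k hk0 hk)
    · rw [hf1 j hj, hfH b hbH] at hab
      exact absurd (hab.symm ▸ hbH) (hval1' j hj0 hj)
    · rw [hf1 j hj, hf1 k hk] at hab
      have := h1inj' (Set.mem_Iic.mpr hj) (Set.mem_Iic.mpr hk) hab
      rw [this]
    · rw [hf1 j hj, hf2 k hk] at hab
      exact absurd hab.symm (hval2' k hk0 hk j hj)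
    · rw [hf2 j hj, hfH b hbH] at hab
      exact absurd (hab.symm ▸ hbH) (hval2H j hj0 hj)
    · rw [hf2 j hj, hf1 k hk] at hab
      exact absurd hab (hval2' j hj0 hj k hk)
    · rw [hf2 j hj, hf2 k hk] at hab
      have := h2inj' (Set.mem_Iic.mpr hj) (Set.mem_Iic.mpr hk) hab
      rw [this]
  have hWF2 : (attach (attach H r w1 s) r w2 t).WellFormed :=
    attach_wf (attach_wf hWF hr ⟨hz1, h10, h1inj, h1new⟩) hr ⟨hz2', h20, h2inj, h2new⟩
  have himgH : H.verts.image f = H.verts := by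
    apply Finset.image_congr (g := id) ?_ |>.trans (Finset.image_id)
    intro a ha
    exact hfH a ha
  have himg1 : ((Finset.Icc 1 N1).image w1).image f = (Finset.Icc 1 N1).image w1' := by
    rw [Finset.image_image]
    apply Finset.image_congr
    intro j hj
    simp only [Finset.mem_coe, Finset.mem_Icc] at hj
    exact hf1 j hj.2
  have himg2 : ((Finset.Icc 1 N2).image w2).image f = (Finset.Icc 1 N2).image w2' := by
    rw [Finset.image_image]
    apply Finset.image_congr
    intro j hj
    simp only [Finset.mem_coe, Finset.mem_Icc] at hj
    exact hf2 j hj.2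
  have hverts : ((attach (attach H r w1 s) r w2 t).verts).image f
      = (attach (attach H r w1' s) r w2' t).verts := by
    show ((H.verts ∪ (Finset.Icc 1 N1).image w1) ∪ (Finset.Icc 1 N2).image w2).image f
      = (H.verts ∪ (Finset.Icc 1 N1).image w1') ∪ (Finset.Icc 1 N2).image w2'
    rw [Finset.image_union, Finset.image_union, himgH, himg1, himg2]
  have hedgesH : H.edges.image (Finset.image f) = H.edges := by
    apply Finset.image_congr (g := id) ?_ |>.trans (Finset.image_id)
    intro e he
    simp only [id]
    apply Finset.image_congr (g := id) ?_ |>.trans (Finset.image_id)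
    intro a ha
    exact hfH a (hWF e he ha)
  have hedges : ((attach (attach H r w1 s) r w2 t).edges).image (Finset.image f)
      = (attach (attach H r w1' s) r w2' t).edges := by
    show ((H.edges ∪ loosePathEdges r s w1) ∪ loosePathEdges r t w2).image (Finset.image f)
      = (H.edges ∪ loosePathEdges r s w1') ∪ loosePathEdges r t w2'
    rw [Finset.image_union, Finset.image_union, hedgesH,
      loosePathEdges_map (fun j hj => hf1 j hj), loosePathEdges_map (fun j hj => hf2 j hj)]
  have h := matchPoly_map hWF2 hinjf r x
  rw [hverts, hedges] at h
  exact h.symm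

end FinHypergraph
end Aux6
section Aux7
open Finset
variable {α : Type*}
namespace FinHypergraph

lemma attach_verts_mono {H : FinHypergraph α} {r : ℕ} {w : ℕ → α} {s p : ℕ} (hsp : s ≤ p) :
    (attach H r w s).verts ⊆ (attach H r w p).verts := by
  apply Finset.union_subset_union (le_refl _)
  apply Finset.image_subset_image
  exact Finset.Icc_subset_Icc (le_refl _) (Nat.mul_le_mul_right _ hsp)

lemma goodW_zero {H : FinHypergraph α} {r : ℕ} {z : α} (hz : z ∈ H.verts) :
    GoodW H r z (fun _ => z) 0 := by
  refine ⟨hz, rfl, ?_, ?_⟩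
  · intro a ha b hb _
    simp only [Nat.zero_mul, Set.mem_Iic, Nat.le_zero] at ha hb
    rw [ha, hb]
  · intro j hj1 hj2
    simp only [Nat.zero_mul, Nat.le_zero] at hj2
    omega

lemma attach_comm {H : FinHypergraph α} {r : ℕ} {w w' : ℕ → α} {a b : ℕ} :
    attach (attach H r w a) r w' b = attach (attach H r w' b) r w a := by
  apply FinHypergraph.ext'
  · show (H.verts ∪ _) ∪ _ = (H.verts ∪ _) ∪ _
    rw [Finset.union_right_comm]
  · show (H.edges ∪ _) ∪ _ = (H.edges ∪ _) ∪ _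
    rw [Finset.union_right_comm]

lemma mem_attach_verts {H : FinHypergraph α} {r : ℕ} {z : α} {w : ℕ → α} {p : ℕ}
    (hg : GoodW H r z w p) {j : ℕ} (hj : j ≤ p * (r - 1)) :
    w j ∈ (attach H r w p).verts := by
  rcases Nat.eq_zero_or_pos j with rfl | hj0
  · exact Finset.mem_union_left _ (hg.2.1 ▸ hg.1)
  · exact Finset.mem_union_right _
      (Finset.mem_image_of_mem w (Finset.mem_Icc.mpr ⟨hj0, hj⟩))

lemma attach_removeVerts_comm {H : FinHypergraph α} {r : ℕ} (hWF : H.WellFormed)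
    {z : α} {w : ℕ → α} {p : ℕ} (hg : GoodW H r z w p) {v : α} (hv : v ∈ H.verts)
    (hvz : v ≠ z) :
    (attach H r w p).removeVerts {v} = attach (H.removeVerts {v}) r w p := by
  obtain ⟨hz, h0, hinj, hnew⟩ := hg
  have hvnot : ∀ j ≤ p * (r-1), v ≠ w j := by
    intro j hj hEq
    rcases Nat.eq_zero_or_pos j with rfl | hj0
    · exact hvz (hEq.trans h0)
    · exact hnew j hj0 hj (hEq ▸ hv)
  apply FinHypergraph.ext'
  · show (H.verts ∪ (Finset.Icc 1 (p * (r-1))).image w) \ {v}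
      = (H.verts \ {v}) ∪ (Finset.Icc 1 (p * (r-1))).image w
    rw [Finset.union_sdiff_distrib]
    congr 1
    rw [Finset.sdiff_eq_self_iff_disjoint, Finset.disjoint_right]
    intro a ha
    rw [Finset.mem_singleton] at ha
    subst ha
    intro hmem
    obtain ⟨j, hj, hEq⟩ := Finset.mem_image.mp hmem
    rw [Finset.mem_Icc] at hj
    exact hvnot j hj.2 hEq.symm
  · show (H.edges ∪ loosePathEdges r p w).filter (fun g => Disjoint g {v})
      = H.edges.filter (fun g => Disjoint g {v}) ∪ loosePathEdges r p w
    rw [Finset.filter_union]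
    congr 1
    apply Finset.filter_true_of_mem
    intro g hg
    obtain ⟨i, hi, rfl⟩ := mem_loosePathEdges.mp hg
    rw [Finset.disjoint_singleton_right]
    intro hmem
    obtain ⟨j, hj, hEq⟩ := Finset.mem_image.mp hmem
    rw [Finset.mem_Icc] at hj
    exact hvnot j (le_trans hj.2 (Nat.mul_le_mul_right _ (by omega))) hEq.symm

end FinHypergraph
end Aux7
/-- For an `r`-uniform supertree `T` (`r ≥ 2`) with at least two edges,
two vertices `u ≠ v` lying in a common edge of `T`, and integers `p ≥ q ≥ 1`,
`φ(T⁽¹⁾(u,v;p,q), x) − φ(T⁽¹⁾(u,v;p+1,q−1), x)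
  = x^((r−2)(q−1)) · ( x^(r−2)·φ(T(u;p−q,0), x) − φ((T−v)(u;p−q+1,0), x) )`. -/
theorem matchPoly_graft_two_adjacent_vertices {α : Type*} (r : ℕ) (hr : 2 ≤ r)
    (T : FinHypergraph α) (hT : T.IsSupertree r) (hTedges : 2 ≤ T.edges.card)
    (u v : α) (huv : u ≠ v) (e : Finset α) (he : e ∈ T.edges)
    (hue : u ∈ e) (hve : v ∈ e)
    (p q : ℕ) (hq1 : 1 ≤ q) (hqp : q ≤ p)
    (A B C D : FinHypergraph α)
    (hA : IsTwoVertexPathAttach r T u p v q A)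
    (hB : IsTwoVertexPathAttach r T u (p + 1) v (q - 1) B)
    (hC : IsTwoPathAttach r T u (p - q) 0 C)
    (hD : IsTwoPathAttach r (T.removeVerts {v}) u (p - q + 1) 0 D) :
    ∀ x : ℝ, A.matchPoly r x - B.matchPoly r x
      = x ^ ((r - 2) * (q - 1)) *
          (x ^ (r - 2) * C.matchPoly r x - D.matchPoly r x) := by
  have hTwf : T.WellFormed := hT.1
  have hTu : T.Uniform r := hT.2.1
  have huT : u ∈ T.verts := hTwf e he hue
  have hvT : v ∈ T.verts := hTwf e he hve
  obtain ⟨TA, hA1, hA2⟩ := hA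
  rw [isPendantPathAttach_iff] at hA1
  obtain ⟨w1, hg1, rfl⟩ := hA1
  rw [isPendantPathAttach_iff] at hA2
  obtain ⟨w2, hg2, rfl⟩ := hA2
  obtain ⟨TB, hB1, hB2⟩ := hB
  rw [isPendantPathAttach_iff] at hB1
  obtain ⟨w1', hg1', rfl⟩ := hB1
  rw [isPendantPathAttach_iff] at hB2
  obtain ⟨w2', hg2', rfl⟩ := hB2
  obtain ⟨TC, hC1, hC2⟩ := hC
  rw [isPendantPathAttach_iff] at hC1
  obtain ⟨wc1, hgc1, rfl⟩ := hC1
  rw [isPendantPathAttach_iff] at hC2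
  obtain ⟨wc2, hgc2, rfl⟩ := hC2
  obtain ⟨TD, hD1, hD2⟩ := hD
  rw [isPendantPathAttach_iff] at hD1
  obtain ⟨wd1, hgd1, rfl⟩ := hD1
  rw [isPendantPathAttach_iff] at hD2
  obtain ⟨wd2, hgd2, rfl⟩ := hD2
  intro x
  -- GoodW instances
  have hg2at : ∀ s ≤ p, ∀ t ≤ q, GoodW (attach T r w1 s) r v w2 t := by
    intro s hs t ht
    obtain ⟨hz2, h20, h2inj, h2new⟩ := hg2
    refine ⟨Finset.mem_union_left _ hvT, h20,
      h2inj.mono (Set.Iic_subset_Iic.mpr (Nat.mul_le_mul_right _ ht)), ?_⟩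
    intro j hj1 hj2 hmem
    exact h2new j hj1 (le_trans hj2 (Nat.mul_le_mul_right _ ht)) (attach_verts_mono hs hmem)
  have hg2at' : ∀ s ≤ p + 1, ∀ t ≤ q - 1, GoodW (attach T r w1' s) r v w2' t := by
    intro s hs t ht
    obtain ⟨hz2, h20, h2inj, h2new⟩ := hg2'
    refine ⟨Finset.mem_union_left _ hvT, h20,
      h2inj.mono (Set.Iic_subset_Iic.mpr (Nat.mul_le_mul_right _ ht)), ?_⟩
    intro j hj1 hj2 hmem
    exact h2new j hj1 (le_trans hj2 (Nat.mul_le_mul_right _ ht)) (attach_verts_mono hs hmem)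
  have hg2T' : ∀ t ≤ q - 1, GoodW T r v w2' t := by
    intro t ht
    obtain ⟨hz2, h20, h2inj, h2new⟩ := hg2'
    refine ⟨hvT, h20,
      h2inj.mono (Set.Iic_subset_Iic.mpr (Nat.mul_le_mul_right _ ht)), ?_⟩
    intro j hj1 hj2 hmem
    exact h2new j hj1 (le_trans hj2 (Nat.mul_le_mul_right _ ht))
      (Finset.mem_union_left _ hmem)
  have hg1sw' : ∀ t ≤ q - 1, ∀ s ≤ p + 1, GoodW (attach T r w2' t) r u w1' s := by
    intro t ht s hs
    obtain ⟨hz1', h10', h1inj', h1new'⟩ := hg1'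
    refine ⟨Finset.mem_union_left _ huT, h10',
      h1inj'.mono (Set.Iic_subset_Iic.mpr (Nat.mul_le_mul_right _ hs)), ?_⟩
    intro j hj1 hj2 hmem
    have hjle : j ≤ (p + 1) * (r - 1) := le_trans hj2 (Nat.mul_le_mul_right _ hs)
    rcases Finset.mem_union.mp hmem with hm | hm
    · exact h1new' j hj1 hjle hm
    · obtain ⟨k, hk, hEq⟩ := Finset.mem_image.mp hm
      rw [Finset.mem_Icc] at hk
      apply hg2'.2.2.2 k hk.1 (le_trans hk.2 (Nat.mul_le_mul_right _ ht))
      rw [hEq]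
      exact mem_attach_verts ⟨hz1', h10', h1inj', h1new'⟩ hjle
  have hgDv : GoodW (T.removeVerts {v}) r u w1 (p - q + 1) := by
    obtain ⟨hz1, h10, h1inj, h1new⟩ := hg1.mono (show p - q + 1 ≤ p from by omega)
    refine ⟨Finset.mem_sdiff.mpr ⟨huT, by simp [huv]⟩, h10, h1inj, ?_⟩
    intro j hj1 hj2 hmem
    exact h1new j hj1 hj2 (Finset.mem_sdiff.mp hmem).1
  -- the families
  set F : ℕ → ℕ → ℝ :=
    fun s t => (attach (attach T r w1 s) r w2 t).matchPoly r x with hF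
  set F' : ℕ → ℕ → ℝ :=
    fun s t => (attach (attach T r w1' s) r w2' t).matchPoly r x with hF'
  have hF0 : ∀ s, F s 0 = (attach T r w1 s).matchPoly r x := by
    intro s; simp only [hF]; rw [attach_zero]
  have hF0' : ∀ s, F' s 0 = (attach T r w1' s).matchPoly r x := by
    intro s; simp only [hF']; rw [attach_zero]
  -- bridges
  have hbr : ∀ s ≤ p, ∀ t ≤ q - 1, F s t = F' s t := by
    intro s hs t ht
    simp only [hF, hF']
    exact matchPoly_attach2_relabel hTwf hTu hr hvT (hg1.mono hs)
      (hg2at s hs t (by omega)) (hg1'.mono (by omega)) (hg2at' s (by omega) t ht) x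
  have hbr1 : ∀ s ≤ p,
      (attach T r w1 s).matchPoly r x = (attach T r w1' s).matchPoly r x := by
    intro s hs
    have h := matchPoly_attach2_relabel hTwf hTu hr hvT (hg1.mono hs)
      (goodW_zero (Finset.mem_union_left _ hvT)) (hg1'.mono (by omega))
      (goodW_zero (Finset.mem_union_left _ hvT)) x
    simpa only [attach_zero] using h
  -- recurrences
  have hrec_t : ∀ s ≤ p, ∀ k, k + 2 ≤ q →
      F s (k+2) = x ^ (r-1) * F s (k+1) - x ^ (r-2) * F s k := by
    intro s hs k hk
    simp only [hF]
    exact matchPoly_attach_two (attach_wf hTwf hr (hg1.mono hs))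
      (attach_uniform hTu hr (hg1.mono hs)) hr (hg2at s hs (k+2) hk) x
  have hrec_1 : ∀ s ≤ p, F s 1 = x ^ (r-1) * (attach T r w1 s).matchPoly r x
      - (attach (T.removeVerts {v}) r w1 s).matchPoly r x := by
    intro s hs
    simp only [hF]
    have h := matchPoly_attach_one (attach_wf hTwf hr (hg1.mono hs))
      (attach_uniform hTu hr (hg1.mono hs)) hr (hg2at s hs 1 hq1) x
    rw [attach_removeVerts_comm hTwf (hg1.mono hs) hvT huv.symm] at h
    exact h
  have hrec_s' : ∀ t ≤ q - 1, ∀ σ, σ + 2 ≤ p + 1 →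
      F' (σ+2) t = x ^ (r-1) * F' (σ+1) t - x ^ (r-2) * F' σ t := by
    intro t ht σ hσ
    have hcomm : ∀ s, F' s t = (attach (attach T r w2' t) r w1' s).matchPoly r x := by
      intro s; simp only [hF']; rw [attach_comm]
    rw [hcomm, hcomm, hcomm]
    exact matchPoly_attach_two (attach_wf hTwf hr (hg2T' t ht))
      (attach_uniform hTu hr (hg2T' t ht)) hr (hg1sw' t ht (σ+2) hσ) x
  -- the main induction
  have claim : ∀ t, 1 ≤ t → t ≤ q →
      F (p - q + t) t - F' (p - q + t + 1) (t - 1)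
        = x ^ ((r - 2) * (t - 1)) *
          (x ^ (r - 2) * F (p - q) 0
            - (attach (T.removeVerts {v}) r w1 (p - q + 1)).matchPoly r x) := by
    intro t
    induction t with
    | zero => intro h1 _; exact absurd h1 (by omega)
    | succ n ih =>
      intro h1 h2
      rcases n with _ | k
      · -- base case t = 1
        show F (p - q + 1) 1 - F' (p - q + 1 + 1) 0
          = x ^ ((r - 2) * 0) *
            (x ^ (r - 2) * F (p - q) 0
              - (attach (T.removeVerts {v}) r w1 (p - q + 1)).matchPoly r x)
        rw [show p - q + 1 + 1 = p - q + 2 from by omega]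
        have e1 := hrec_1 (p - q + 1) (by omega)
        have e2 := hrec_s' 0 (by omega) (p - q) (by omega)
        have b1 : F' (p - q + 1) 0 = (attach T r w1 (p - q + 1)).matchPoly r x := by
          rw [hF0']
          exact (hbr1 (p - q + 1) (by omega)).symm
        have b0 : F' (p - q) 0 = F (p - q) 0 := by
          rw [hF0', hF0]
          exact (hbr1 (p - q) (by omega)).symm
        rw [e1, e2, b1, b0, Nat.mul_zero, pow_zero]
        ring
      · -- inductive step t = k + 2
        rw [show p - q + (k + 1 + 1) + 1 = p - q + k + 1 + 2 from by omega,
          show p - q + (k + 1 + 1) = p - q + k + 2 from by omega,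
          show (k + 1 + 1 : ℕ) - 1 = k + 1 from by omega,
          show (k + 1 + 1 : ℕ) = k + 2 from by omega]
        have e1 := hrec_t (p - q + k + 2) (by omega) k (by omega)
        have e2 := hrec_s' (k + 1) (by omega) (p - q + k + 1) (by omega)
        rw [show p - q + k + 1 + 1 = p - q + k + 2 from by omega] at e2
        have ih' := ih (by omega) (by omega)
        rw [show p - q + (k + 1) + 1 = p - q + k + 2 from by omega,
          show p - q + (k + 1) = p - q + k + 1 from by omega,
          show (k + 1 : ℕ) - 1 = k from by omega] at ih'
        have br1 := hbr (p - q + k + 2) (by omega) (k + 1) (by omega)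
        have br2 := hbr (p - q + k + 1) (by omega) (k + 1) (by omega)
        have br3 := hbr (p - q + k + 2) (by omega) k (by omega)
        rw [e1, e2, br1, ← br2, br3]
        linear_combination x ^ (r - 2) * ih'
  -- final assembly
  have hq' := claim q hq1 le_rfl
  rw [show p - q + q = p from by omega] at hq'
  have hCval : (attach (attach T r wc1 (p - q)) r wc2 0).matchPoly r x
      = (attach T r w1 (p - q)).matchPoly r x := by
    have h := matchPoly_attach2_relabel hTwf hTu hr huT hgc1 hgc2
      (hg1.mono (by omega)) (goodW_zero (Finset.mem_union_left _ huT)) x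
    simpa only [attach_zero] using h
  have huTv : u ∈ (T.removeVerts {v}).verts :=
    Finset.mem_sdiff.mpr ⟨huT, by simp [huv]⟩
  have hDval : (attach (attach (T.removeVerts {v}) r wd1 (p - q + 1)) r wd2 0).matchPoly r x
      = (attach (T.removeVerts {v}) r w1 (p - q + 1)).matchPoly r x := by
    have h := matchPoly_attach2_relabel (removeVerts_wf hTwf _) (removeVerts_uniform hTu _)
      hr huTv hgd1 hgd2 hgDv (goodW_zero (Finset.mem_union_left _ huTv)) x
    simpa only [attach_zero] using h
  simp only [hF, hF'] at hq'
  rw [hq', hCval, hDval]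
  simp only [attach_zero]
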